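/- Let M, C ≥ 0 and Δ ∈ (0, 1]. Let h : ℝ → ℝ be twice continuously differentiable with |h(y)|, |h'(y)|, |h''(y)| ≤ M for all y, and let u be the Δ-sliding average of h (so u is differentiable with u'(y) = (h(y+Δ/2) − h(y−Δ/2))/Δ). Let v : ℝ → ℝ be three times continuously differentiable with |v(y)|, |v'(y)|, |v''(y)|, |v'''(y)| ≤ M for all y. Fix y₀ ∈ ℝ and suppose û₊, û₋, ṽ₊, ṽ₋ ∈ ℝ satisfy |û₊ − h(y₀ + Δ/2)| ≤ C·Δ³, |û₋ − h(y₀ − Δ/2)| ≤ C·Δ³, |ṽ₊ − v(y₀ + Δ/2)| ≤ C·Δ³, and |ṽ₋ − v(y₀ − Δ/2)| ≤ C·Δ³. Then there is a constant K depending only on M and C (not on Δ, y₀, h, v) such that |(ṽ₊·û₊ − ṽ₋·û₋)/Δ − (u'(y₀)·v(y₀) + u(y₀)·v'(y₀))| ≤ K·Δ². -/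

import Mathlib

open intervalIntegral MeasureTheory

private lemma mvt_abs (f : ℝ → ℝ) (hf : Differentiable ℝ f) {M : ℝ}
    (hb : ∀ y, |deriv f y| ≤ M) (a b : ℝ) : |f b - f a| ≤ M * |b - a| := by
  have := Convex.norm_image_sub_le_of_norm_deriv_le (fun x _ => (hf x))
    (fun x _ => by simpa [Real.norm_eq_abs] using hb x) convex_univ
    (Set.mem_univ a) (Set.mem_univ b)
  simpa [Real.norm_eq_abs] using this

private lemma sym2 (f : ℝ → ℝ) (hf : Differentiable ℝ f) (hf' : Differentiable ℝ (deriv f))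
    {M : ℝ} (hb : ∀ y, |deriv (deriv f) y| ≤ M) (y₀ : ℝ) {δ : ℝ} (hδ : 0 ≤ δ) :
    |f (y₀ + δ) + f (y₀ - δ) - 2 * f y₀| ≤ M * δ ^ 2 := by
  set g : ℝ → ℝ := fun t => f (y₀ + t) + f (y₀ - t) - 2 * f y₀ with hgdef
  set g' : ℝ → ℝ := fun t => deriv f (y₀ + t) - deriv f (y₀ - t) with hg'def
  have hg : ∀ t : ℝ, HasDerivAt g (g' t) t := by
    intro t
    have h1 : HasDerivAt (fun t : ℝ => f (y₀ + t)) (deriv f (y₀ + t)) t := by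
      simpa [Function.comp_def] using (hf (y₀ + t)).hasDerivAt.comp t ((hasDerivAt_id t).const_add y₀)
    have h2 : HasDerivAt (fun t : ℝ => f (y₀ - t)) (-deriv f (y₀ - t)) t := by
      simpa [Function.comp_def] using (hf (y₀ - t)).hasDerivAt.comp t ((hasDerivAt_id t).const_sub y₀)
    simpa [hgdef, hg'def, sub_eq_add_neg] using (h1.add h2).sub_const (2 * f y₀)
  have hcont : Continuous g' := by
    apply Continuous.sub
    · exact hf'.continuous.comp (by continuity)
    · exact hf'.continuous.comp (by continuity)
  have hint : IntervalIntegrable g' volume 0 δ := hcont.intervalIntegrable _ _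
  have hftc : ∫ t in (0:ℝ)..δ, g' t = g δ - g 0 :=
    intervalIntegral.integral_eq_sub_of_hasDerivAt (fun t _ => hg t) hint
  have hg0 : g 0 = 0 := by simp [hgdef]; ring
  have hgδ : g δ = ∫ t in (0:ℝ)..δ, g' t := by rw [hftc, hg0, sub_zero]
  have hbound : ∀ t ∈ Set.Icc (0:ℝ) δ, |g' t| ≤ 2 * M * t := by
    intro t ht
    have h1 := mvt_abs (deriv f) hf' hb (y₀ - t) (y₀ + t)
    have habs : |(y₀ + t) - (y₀ - t)| = 2 * t := by
      rw [show (y₀ + t) - (y₀ - t) = 2 * t by ring, abs_of_nonneg (by linarith [ht.1])]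
    calc |g' t| ≤ M * |(y₀ + t) - (y₀ - t)| := h1
      _ = 2 * M * t := by rw [habs]; ring
  have key : |∫ t in (0:ℝ)..δ, g' t| ≤ M * δ ^ 2 := by
    calc |∫ t in (0:ℝ)..δ, g' t| ≤ ∫ t in (0:ℝ)..δ, |g' t| :=
          intervalIntegral.abs_integral_le_integral_abs hδ
      _ ≤ ∫ t in (0:ℝ)..δ, 2 * M * t := by
          apply intervalIntegral.integral_mono_on hδ hint.abs
            (((continuous_const.mul continuous_id).intervalIntegrable _ _)) hbound
      _ = M * δ ^ 2 := by
          rw [intervalIntegral.integral_const_mul, integral_id]; ring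
  rw [show f (y₀ + δ) + f (y₀ - δ) - 2 * f y₀ = g δ from rfl, hgδ]
  exact key

private lemma sym3 (f : ℝ → ℝ) (hf : Differentiable ℝ f) (hf' : Differentiable ℝ (deriv f))
    (hf'' : Differentiable ℝ (deriv (deriv f))) {M : ℝ}
    (hb : ∀ y, |deriv (deriv (deriv f)) y| ≤ M) (y₀ : ℝ) {δ : ℝ} (hδ : 0 ≤ δ) :
    |f (y₀ + δ) - f (y₀ - δ) - 2 * δ * deriv f y₀| ≤ M * δ ^ 3 / 3 := by
  set g : ℝ → ℝ := fun t => f (y₀ + t) - f (y₀ - t) - 2 * t * deriv f y₀ with hgdef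
  set g' : ℝ → ℝ := fun t => deriv f (y₀ + t) + deriv f (y₀ - t) - 2 * deriv f y₀ with hg'def
  have hg : ∀ t : ℝ, HasDerivAt g (g' t) t := by
    intro t
    have h1 : HasDerivAt (fun t : ℝ => f (y₀ + t)) (deriv f (y₀ + t)) t := by
      simpa [Function.comp_def] using (hf (y₀ + t)).hasDerivAt.comp t ((hasDerivAt_id t).const_add y₀)
    have h2 : HasDerivAt (fun t : ℝ => f (y₀ - t)) (-deriv f (y₀ - t)) t := by
      simpa [Function.comp_def] using (hf (y₀ - t)).hasDerivAt.comp t ((hasDerivAt_id t).const_sub y₀)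
    have h3 : HasDerivAt (fun t : ℝ => 2 * t * deriv f y₀) (2 * deriv f y₀) t := by
      have := ((hasDerivAt_id t).const_mul (2:ℝ)).mul_const (deriv f y₀)
      simpa using this
    have h4 : g' t = deriv f (y₀ + t) - -deriv f (y₀ - t) - 2 * deriv f y₀ := by
      rw [hg'def]; ring
    rw [h4]
    exact (h1.sub h2).sub h3
  have hcont : Continuous g' := by
    apply Continuous.sub
    · exact (hf'.continuous.comp (by continuity)).add (hf'.continuous.comp (by continuity))
    · exact continuous_const
  have hint : IntervalIntegrable g' volume 0 δ := hcont.intervalIntegrable _ _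
  have hftc : ∫ t in (0:ℝ)..δ, g' t = g δ - g 0 :=
    intervalIntegral.integral_eq_sub_of_hasDerivAt (fun t _ => hg t) hint
  have hg0 : g 0 = 0 := by simp [hgdef]
  have hgδ : g δ = ∫ t in (0:ℝ)..δ, g' t := by rw [hftc, hg0, sub_zero]
  have hbound : ∀ t ∈ Set.Icc (0:ℝ) δ, |g' t| ≤ M * t ^ 2 := by
    intro t ht
    exact sym2 (deriv f) hf' hf'' hb y₀ ht.1
  have key : |∫ t in (0:ℝ)..δ, g' t| ≤ M * δ ^ 3 / 3 := by
    calc |∫ t in (0:ℝ)..δ, g' t| ≤ ∫ t in (0:ℝ)..δ, |g' t| :=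
          intervalIntegral.abs_integral_le_integral_abs hδ
      _ ≤ ∫ t in (0:ℝ)..δ, M * t ^ 2 := by
          apply intervalIntegral.integral_mono_on hδ hint.abs
            ((continuous_const.mul (continuous_pow 2)).intervalIntegrable _ _) hbound
      _ = M * δ ^ 3 / 3 := by
          rw [intervalIntegral.integral_const_mul, integral_pow]; push_cast; ring
  rw [show f (y₀ + δ) - f (y₀ - δ) - 2 * δ * deriv f y₀ = g δ from rfl, hgδ]
  exact key

private lemma avg_est (h : ℝ → ℝ) (hh : Differentiable ℝ h) (hh' : Differentiable ℝ (deriv h))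
    {M : ℝ} (hb : ∀ y, |deriv (deriv h) y| ≤ M) (y₀ : ℝ) {δ : ℝ} (hδ : 0 ≤ δ) :
    |(∫ s in (y₀ - δ)..(y₀ + δ), h s) - 2 * δ * h y₀| ≤ M * δ ^ 3 / 3 := by
  have hc : Continuous h := hh.continuous
  have hIp : IntervalIntegrable (fun t => h (y₀ + t)) volume 0 δ :=
    (hc.comp (by continuity)).intervalIntegrable _ _
  have hIm : IntervalIntegrable (fun t => h (y₀ - t)) volume 0 δ :=
    (hc.comp (by continuity)).intervalIntegrable _ _
  have hIp' : IntervalIntegrable (fun t => h (y₀ + t)) volume (-δ) 0 :=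
    (hc.comp (by continuity)).intervalIntegrable _ _
  have hIsum : IntervalIntegrable (fun t => h (y₀ + t) + h (y₀ - t)) volume 0 δ := hIp.add hIm
  have e2 : (∫ t in (-δ:ℝ)..(0:ℝ), h (y₀ + t)) = ∫ t in (0:ℝ)..δ, h (y₀ - t) := by
    have := intervalIntegral.integral_comp_neg (fun x => h (y₀ + x)) (a := 0) (b := δ)
    simp only [neg_zero] at this
    rw [← this]
    simp only [← sub_eq_add_neg]
  have hsub : (∫ s in (y₀ - δ)..(y₀ + δ), h s)
      = ∫ t in (0:ℝ)..δ, (h (y₀ + t) + h (y₀ - t)) := by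
    have hA : y₀ + -δ = y₀ - δ := by ring
    calc (∫ s in (y₀ - δ)..(y₀ + δ), h s) = ∫ t in (-δ:ℝ)..δ, h (y₀ + t) := by
          rw [intervalIntegral.integral_comp_add_left h y₀, hA]
      _ = (∫ t in (-δ:ℝ)..(0:ℝ), h (y₀ + t)) + ∫ t in (0:ℝ)..δ, h (y₀ + t) :=
          (intervalIntegral.integral_add_adjacent_intervals hIp' hIp).symm
      _ = (∫ t in (0:ℝ)..δ, h (y₀ - t)) + ∫ t in (0:ℝ)..δ, h (y₀ + t) := by rw [e2]
      _ = ∫ t in (0:ℝ)..δ, (h (y₀ + t) + h (y₀ - t)) := by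
          rw [intervalIntegral.integral_add hIp hIm]; ring
  have hconst : (2 * δ * h y₀ : ℝ) = ∫ _ in (0:ℝ)..δ, (2 * h y₀ : ℝ) := by
    rw [intervalIntegral.integral_const, smul_eq_mul]; ring
  have hdiff : (∫ s in (y₀ - δ)..(y₀ + δ), h s) - 2 * δ * h y₀
      = ∫ t in (0:ℝ)..δ, (h (y₀ + t) + h (y₀ - t) - 2 * h y₀) := by
    rw [hsub, hconst, ← intervalIntegral.integral_sub hIsum intervalIntegrable_const]
  rw [hdiff]
  have hbound : ∀ t ∈ Set.Icc (0:ℝ) δ, |h (y₀ + t) + h (y₀ - t) - 2 * h y₀| ≤ M * t ^ 2 :=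
    fun t ht => sym2 h hh hh' hb y₀ ht.1
  calc |∫ t in (0:ℝ)..δ, (h (y₀ + t) + h (y₀ - t) - 2 * h y₀)|
      ≤ ∫ t in (0:ℝ)..δ, |h (y₀ + t) + h (y₀ - t) - 2 * h y₀| :=
        intervalIntegral.abs_integral_le_integral_abs hδ
    _ ≤ ∫ t in (0:ℝ)..δ, M * t ^ 2 := by
        apply intervalIntegral.integral_mono_on hδ (hIsum.sub intervalIntegrable_const).abs
          ((continuous_const.mul (continuous_pow 2)).intervalIntegrable _ _) hbound
    _ = M * δ ^ 3 / 3 := by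
        rw [intervalIntegral.integral_const_mul, integral_pow]; push_cast; ring


set_option maxHeartbeats 1000000 in

/-- (Quantitative content of Theorem 2.2 of the paper.) Let `M, C ≥ 0`.
There is a constant `K`, depending only on `M` and `C`, such that for all `Δ ∈ (0,1]`,
all `h : ℝ → ℝ` twice continuously differentiable with `|h|, |h'|, |h''| ≤ M`
(whose `Δ`-sliding average is `u`, so `u(y₀) = (1/Δ)∫_{y₀-Δ/2}^{y₀+Δ/2} h` and
`u'(y₀) = (h(y₀+Δ/2) − h(y₀−Δ/2))/Δ`), all `v : ℝ → ℝ` thrice continuously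
differentiable with `|v|, |v'|, |v''|, |v'''| ≤ M`, every `y₀`, and all reconstructed values
`û₊, û₋, ṽ₊, ṽ₋` that are `C·Δ³`-accurate approximations of the corresponding interface
values of `h` and `v`, the staggered flux difference satisfies
`|(ṽ₊û₊ − ṽ₋û₋)/Δ − (u'(y₀)v(y₀) + u(y₀)v'(y₀))| ≤ K·Δ²`. -/
theorem staggered_weno_second_order_limit (M C : ℝ) (hM : 0 ≤ M) (hC : 0 ≤ C) :
    ∃ K : ℝ, ∀ (Δ : ℝ), 0 < Δ → Δ ≤ 1 →
      ∀ (h v : ℝ → ℝ), ContDiff ℝ 2 h →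
        (∀ y, |h y| ≤ M) → (∀ y, |deriv h y| ≤ M) → (∀ y, |iteratedDeriv 2 h y| ≤ M) →
        ContDiff ℝ 3 v →
        (∀ y, |v y| ≤ M) → (∀ y, |deriv v y| ≤ M) →
        (∀ y, |iteratedDeriv 2 v y| ≤ M) → (∀ y, |iteratedDeriv 3 v y| ≤ M) →
        ∀ (y₀ uhatP uhatM vtilP vtilM : ℝ),
          |uhatP - h (y₀ + Δ / 2)| ≤ C * Δ ^ 3 →
          |uhatM - h (y₀ - Δ / 2)| ≤ C * Δ ^ 3 →
          |vtilP - v (y₀ + Δ / 2)| ≤ C * Δ ^ 3 →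
          |vtilM - v (y₀ - Δ / 2)| ≤ C * Δ ^ 3 →
          |(vtilP * uhatP - vtilM * uhatM) / Δ -
              ((h (y₀ + Δ / 2) - h (y₀ - Δ / 2)) / Δ * v y₀ +
                ((1 / Δ) * ∫ s in (y₀ - Δ / 2)..(y₀ + Δ / 2), h s) * deriv v y₀)| ≤
            K * Δ ^ 2 := by
  refine ⟨2 * C * (2 * M + C) + M ^ 2, ?_⟩
  intro Δ hΔ hΔ1 h v hh hb0 hb1 hb2 hv hv0 hv1 hv2 hv3 y₀ uhatP uhatM vtilP vtilM eU eUm eV eVm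
  have hΔ0 : Δ ≠ 0 := ne_of_gt hΔ
  have hδ : (0:ℝ) ≤ Δ / 2 := by linarith
  -- regularity
  have H2 := contDiff_succ_iff_deriv.mp (show ContDiff ℝ (1+1) h by exact_mod_cast hh)
  have hhd : Differentiable ℝ h := H2.1
  have hhd1 : Differentiable ℝ (deriv h) := (H2.2.2).differentiable one_ne_zero
  have H3 := contDiff_succ_iff_deriv.mp (show ContDiff ℝ (2+1) v by exact_mod_cast hv)
  have hvd : Differentiable ℝ v := H3.1
  have H2v := contDiff_succ_iff_deriv.mp
    (show ContDiff ℝ (1+1) (deriv v) by exact_mod_cast H3.2.2)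
  have hvd1 : Differentiable ℝ (deriv v) := H2v.1
  have hvd2 : Differentiable ℝ (deriv (deriv v)) := (H2v.2.2).differentiable one_ne_zero
  -- bounds on pure derivatives
  have idh2 : iteratedDeriv 2 h = deriv (deriv h) := by
    rw [show (2:ℕ) = 1+1 from rfl, iteratedDeriv_succ, iteratedDeriv_one]
  have idv2 : iteratedDeriv 2 v = deriv (deriv v) := by
    rw [show (2:ℕ) = 1+1 from rfl, iteratedDeriv_succ, iteratedDeriv_one]
  have idv3 : iteratedDeriv 3 v = deriv (deriv (deriv v)) := by
    rw [show (3:ℕ) = 2+1 from rfl, iteratedDeriv_succ, show (2:ℕ) = 1+1 from rfl,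
      iteratedDeriv_succ, iteratedDeriv_one]
  have hb2' : ∀ y, |deriv (deriv h) y| ≤ M := by intro y; rw [← idh2]; exact hb2 y
  have hv2' : ∀ y, |deriv (deriv v) y| ≤ M := by intro y; rw [← idv2]; exact hv2 y
  have hv3' : ∀ y, |deriv (deriv (deriv v)) y| ≤ M := by intro y; rw [← idv3]; exact hv3 y
  -- abbreviations
  set hp := h (y₀ + Δ / 2) with hhp
  set hm := h (y₀ - Δ / 2) with hhm
  set vp := v (y₀ + Δ / 2) with hvp
  set vm := v (y₀ - Δ / 2) with hvm
  set v0 := v y₀ with hv0'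
  set dv := deriv v y₀ with hdv
  set I := (∫ s in (y₀ - Δ / 2)..(y₀ + Δ / 2), h s) with hI
  -- Taylor-type estimates
  have B1 : |hp - hm| ≤ M * Δ := by
    have := mvt_abs h hhd hb1 (y₀ - Δ/2) (y₀ + Δ/2)
    rw [show (y₀ + Δ/2) - (y₀ - Δ/2) = Δ by ring, abs_of_pos hΔ] at this
    exact this
  have B2 : |vp + vm - 2 * v0| ≤ M * (Δ/2) ^ 2 := sym2 v hvd hvd1 hv2' y₀ hδ
  have B3 : |vp - vm - 2 * (Δ/2) * dv| ≤ M * (Δ/2) ^ 3 / 3 := sym3 v hvd hvd1 hvd2 hv3' y₀ hδ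
  have B4 : |hp + hm - 2 * h y₀| ≤ M * (Δ/2) ^ 2 := sym2 h hhd hhd1 hb2' y₀ hδ
  have B5 : |I - 2 * (Δ/2) * h y₀| ≤ M * (Δ/2) ^ 3 / 3 := avg_est h hhd hhd1 hb2' y₀ hδ
  have hpb : |hp| ≤ M := hb0 _
  have hmb : |hm| ≤ M := hb0 _
  have vpb : |vp| ≤ M := hv0 _
  have vmb : |vm| ≤ M := hv0 _
  have dvb : |dv| ≤ M := hv1 _
  -- key algebraic decomposition
  have decomp : (vtilP * uhatP - vtilM * uhatM) / Δ - ((hp - hm) / Δ * v0 + (1/Δ * I) * dv)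
      = (vtilP * uhatP - vp * hp) / Δ + (vm * hm - vtilM * uhatM) / Δ
        + (hp - hm) / Δ * ((vp + vm - 2 * v0) / 2)
        + (hp + hm) / 2 * ((vp - vm - Δ * dv) / Δ)
        + ((hp + hm - 2 * h y₀) / 2 + (Δ * h y₀ - I) / Δ) * dv := by
    field_simp
    ring
  rw [decomp]
  -- bounds on the five pieces
  have hΔ3 : Δ ^ 3 ≤ 1 := by nlinarith
  have P1 : |(vtilP * uhatP - vp * hp) / Δ| ≤ C * (2 * M + C) * Δ ^ 2 := by
    rw [abs_div, abs_of_pos hΔ, div_le_iff₀ hΔ]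
    have hvtp : |vtilP| ≤ M + C * Δ ^ 3 := by
      calc |vtilP| = |vp + (vtilP - vp)| := by ring_nf
        _ ≤ |vp| + |vtilP - vp| := abs_add_le _ _
        _ ≤ M + C * Δ ^ 3 := add_le_add vpb eV
    have step : |vtilP * uhatP - vp * hp| ≤ (M + C * Δ ^ 3) * (C * Δ ^ 3) + (C * Δ ^ 3) * M := by
      calc |vtilP * uhatP - vp * hp| = |vtilP * (uhatP - hp) + (vtilP - vp) * hp| := by ring_nf
        _ ≤ |vtilP| * |uhatP - hp| + |vtilP - vp| * |hp| := by
            refine (abs_add_le _ _).trans ?_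
            rw [abs_mul, abs_mul]
        _ ≤ (M + C * Δ ^ 3) * (C * Δ ^ 3) + (C * Δ ^ 3) * M := by gcongr <;> positivity
    refine step.trans ?_
    have hΔp3 : (0:ℝ) ≤ Δ ^ 3 := by positivity
    nlinarith [mul_nonneg hC (mul_nonneg hC hΔp3), mul_nonneg (mul_nonneg hC hC) hΔp3]
  have P2 : |(vm * hm - vtilM * uhatM) / Δ| ≤ C * (2 * M + C) * Δ ^ 2 := by
    rw [abs_div, abs_of_pos hΔ, div_le_iff₀ hΔ]
    have hvtm : |vtilM| ≤ M + C * Δ ^ 3 := by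
      calc |vtilM| = |vm + (vtilM - vm)| := by ring_nf
        _ ≤ |vm| + |vtilM - vm| := abs_add_le _ _
        _ ≤ M + C * Δ ^ 3 := add_le_add vmb eVm
    have step : |vm * hm - vtilM * uhatM| ≤ (M + C * Δ ^ 3) * (C * Δ ^ 3) + (C * Δ ^ 3) * M := by
      calc |vm * hm - vtilM * uhatM| = |vtilM * (uhatM - hm) + (vtilM - vm) * hm| := by
            rw [abs_sub_comm]; ring_nf
        _ ≤ |vtilM| * |uhatM - hm| + |vtilM - vm| * |hm| := by
            refine (abs_add_le _ _).trans ?_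
            rw [abs_mul, abs_mul]
        _ ≤ (M + C * Δ ^ 3) * (C * Δ ^ 3) + (C * Δ ^ 3) * M := by gcongr <;> positivity
    refine step.trans ?_
    have hΔp3 : (0:ℝ) ≤ Δ ^ 3 := by positivity
    nlinarith [mul_nonneg hC (mul_nonneg hC hΔp3), mul_nonneg (mul_nonneg hC hC) hΔp3]
  have q1 : |(hp - hm) / Δ| ≤ M := by
    rw [abs_div, abs_of_pos hΔ, div_le_iff₀ hΔ]; exact B1
  have q2 : |(vp + vm - 2 * v0) / 2| ≤ M * Δ ^ 2 / 8 := by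
    rw [abs_div, show |(2:ℝ)| = 2 by norm_num, div_le_iff₀ (by norm_num : (0:ℝ) < 2)]
    have : M * (Δ/2) ^ 2 = M * Δ ^ 2 / 8 * 2 := by ring
    linarith [B2]
  have P3 : |(hp - hm) / Δ * ((vp + vm - 2 * v0) / 2)| ≤ M * (M * Δ ^ 2 / 8) := by
    rw [abs_mul]
    exact mul_le_mul q1 q2 (abs_nonneg _) hM
  have q3 : |(hp + hm) / 2| ≤ M := by
    rw [abs_div, show |(2:ℝ)| = 2 by norm_num, div_le_iff₀ (by norm_num : (0:ℝ) < 2)]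
    calc |hp + hm| ≤ |hp| + |hm| := abs_add_le _ _
      _ ≤ M * 2 := by linarith
  have q4 : |(vp - vm - Δ * dv) / Δ| ≤ M * Δ ^ 2 / 24 := by
    rw [abs_div, abs_of_pos hΔ, div_le_iff₀ hΔ]
    have e : vp - vm - 2 * (Δ/2) * dv = vp - vm - Δ * dv := by ring
    rw [e] at B3
    have : M * (Δ/2) ^ 3 / 3 = M * Δ ^ 2 / 24 * Δ := by ring
    linarith [B3]
  have P4 : |(hp + hm) / 2 * ((vp - vm - Δ * dv) / Δ)| ≤ M * (M * Δ ^ 2 / 24) := by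
    rw [abs_mul]
    exact mul_le_mul q3 q4 (abs_nonneg _) hM
  have q5 : |(hp + hm - 2 * h y₀) / 2| ≤ M * Δ ^ 2 / 8 := by
    rw [abs_div, show |(2:ℝ)| = 2 by norm_num, div_le_iff₀ (by norm_num : (0:ℝ) < 2)]
    have : M * (Δ/2) ^ 2 = M * Δ ^ 2 / 8 * 2 := by ring
    linarith [B4]
  have q6 : |(Δ * h y₀ - I) / Δ| ≤ M * Δ ^ 2 / 24 := by
    rw [abs_div, abs_of_pos hΔ, div_le_iff₀ hΔ]
    have e : I - 2 * (Δ/2) * h y₀ = I - Δ * h y₀ := by ring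
    rw [e] at B5
    rw [abs_sub_comm]
    have : M * (Δ/2) ^ 3 / 3 = M * Δ ^ 2 / 24 * Δ := by ring
    linarith [B5]
  have P5 : |((hp + hm - 2 * h y₀) / 2 + (Δ * h y₀ - I) / Δ) * dv|
      ≤ (M * Δ ^ 2 / 8 + M * Δ ^ 2 / 24) * M := by
    rw [abs_mul]
    refine mul_le_mul ?_ dvb (abs_nonneg _) (by positivity)
    calc |(hp + hm - 2 * h y₀) / 2 + (Δ * h y₀ - I) / Δ|
        ≤ |(hp + hm - 2 * h y₀) / 2| + |(Δ * h y₀ - I) / Δ| := abs_add_le _ _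
      _ ≤ M * Δ ^ 2 / 8 + M * Δ ^ 2 / 24 := add_le_add q5 q6
  -- triangle inequality and conclusion
  set T1 := (vtilP * uhatP - vp * hp) / Δ
  set T2 := (vm * hm - vtilM * uhatM) / Δ
  set T3 := (hp - hm) / Δ * ((vp + vm - 2 * v0) / 2)
  set T4 := (hp + hm) / 2 * ((vp - vm - Δ * dv) / Δ)
  set T5 := ((hp + hm - 2 * h y₀) / 2 + (Δ * h y₀ - I) / Δ) * dv
  have tri : |T1 + T2 + T3 + T4 + T5| ≤ |T1| + |T2| + |T3| + |T4| + |T5| := by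
    calc |T1 + T2 + T3 + T4 + T5| ≤ |T1 + T2 + T3 + T4| + |T5| := abs_add_le _ _
      _ ≤ |T1 + T2 + T3| + |T4| + |T5| := by linarith [abs_add_le (T1 + T2 + T3) T4]
      _ ≤ |T1 + T2| + |T3| + |T4| + |T5| := by linarith [abs_add_le (T1 + T2) T3]
      _ ≤ |T1| + |T2| + |T3| + |T4| + |T5| := by linarith [abs_add_le T1 T2]
  refine tri.trans ?_
  have hMM : (0:ℝ) ≤ M * M * Δ ^ 2 := by positivity
  nlinarith [P1, P2, P3, P4, P5]
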